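/- Exact solution (3-56) of system (2-23): Let d₁, d₂, d₃ be real constants with d₃ ≠ 0, and let α₁, α₂, C₁, C₃, C₄ be real constants. Define φ(t,x,y) = (α₁x + α₂y)·sin 2t + (α₁y − α₂x)·cos 2t + C₁. On the open set Ω = {(t,x,y) ∈ ℝ³ : φ(t,x,y) ≠ 0}, the functions u = 6d₂(α₁² + α₂²)·φ⁻², v = 6d₁(α₁² + α₂²)·φ⁻², w = ((α₁² + α₂²)/d₃)·(−6d₁d₂·φ⁻² + C₃·(φ − C₁) + C₄) satisfy system (2-23): u_t + 2y u_x − 2x u_y = d₁(u_xx + u_yy) − uv, v_t + 2y v_x − 2x v_y = d₂(v_xx + v_yy) − uv, w_t + 2y w_x − 2x w_y = d₃(w_xx + w_yy) + uv, at every point of Ω. -/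

import Mathlib

/-- Partial derivative with respect to `t` of a function of `(t,x,y)`. -/
noncomputable def pdT (f : ℝ × ℝ × ℝ → ℝ) (p : ℝ × ℝ × ℝ) : ℝ := fderiv ℝ f p (1, 0, 0)
/-- Partial derivative with respect to `x`. -/
noncomputable def pdX (f : ℝ × ℝ × ℝ → ℝ) (p : ℝ × ℝ × ℝ) : ℝ := fderiv ℝ f p (0, 1, 0)
/-- Partial derivative with respect to `y`. -/
noncomputable def pdY (f : ℝ × ℝ × ℝ → ℝ) (p : ℝ × ℝ × ℝ) : ℝ := fderiv ℝ f p (0, 0, 1)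

/-- `(u,v,w)` solves system (2-23), the convective Lotka–Volterra system with
stream function `Ψ = x² + y²` and `k = 1`, on `Ω`. -/
def Solves223 (d₁ d₂ d₃ : ℝ) (u v w : ℝ × ℝ × ℝ → ℝ) (Ω : Set (ℝ × ℝ × ℝ)) : Prop :=
  ∀ p ∈ Ω,
    (pdT u p + 2 * p.2.2 * pdX u p - 2 * p.2.1 * pdY u p
      = d₁ * (pdX (pdX u) p + pdY (pdY u) p) - u p * v p) ∧
    (pdT v p + 2 * p.2.2 * pdX v p - 2 * p.2.1 * pdY v p
      = d₂ * (pdX (pdX v) p + pdY (pdY v) p) - u p * v p) ∧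
    (pdT w p + 2 * p.2.2 * pdX w p - 2 * p.2.1 * pdY w p
      = d₃ * (pdX (pdX w) p + pdY (pdY w) p) + u p * v p)

/-- The phase `φ(t,x,y) = (α₁x + α₂y)·sin 2t + (α₁y − α₂x)·cos 2t + C₁`. -/
noncomputable def phi (α₁ α₂ C₁ : ℝ) (p : ℝ × ℝ × ℝ) : ℝ :=
  (α₁ * p.2.1 + α₂ * p.2.2) * Real.sin (2 * p.1)
    + (α₁ * p.2.2 - α₂ * p.2.1) * Real.cos (2 * p.1) + C₁

/- ### Auxiliary development -/

section LVAux

/-- Projection onto the `t` coordinate. -/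
noncomputable def pr1 : ℝ × ℝ × ℝ →L[ℝ] ℝ := ContinuousLinearMap.fst ℝ ℝ (ℝ × ℝ)
/-- Projection onto the `x` coordinate. -/
noncomputable def pr2 : ℝ × ℝ × ℝ →L[ℝ] ℝ :=
  (ContinuousLinearMap.fst ℝ ℝ ℝ).comp (ContinuousLinearMap.snd ℝ ℝ (ℝ × ℝ))
/-- Projection onto the `y` coordinate. -/
noncomputable def pr3 : ℝ × ℝ × ℝ →L[ℝ] ℝ :=
  (ContinuousLinearMap.snd ℝ ℝ ℝ).comp (ContinuousLinearMap.snd ℝ ℝ (ℝ × ℝ))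

@[simp] lemma pr1_apply (v : ℝ × ℝ × ℝ) : pr1 v = v.1 := rfl
@[simp] lemma pr2_apply (v : ℝ × ℝ × ℝ) : pr2 v = v.2.1 := rfl
@[simp] lemma pr3_apply (v : ℝ × ℝ × ℝ) : pr3 v = v.2.2 := rfl

variable (α₁ α₂ C₁ : ℝ)

/-- `∂φ/∂t`. -/
noncomputable def phiT (α₁ α₂ : ℝ) (p : ℝ × ℝ × ℝ) : ℝ :=
  2 * (α₁ * p.2.1 + α₂ * p.2.2) * Real.cos (2 * p.1)
    - 2 * (α₁ * p.2.2 - α₂ * p.2.1) * Real.sin (2 * p.1)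
/-- `∂φ/∂x`. -/
noncomputable def phiX (α₁ α₂ : ℝ) (p : ℝ × ℝ × ℝ) : ℝ :=
  α₁ * Real.sin (2 * p.1) - α₂ * Real.cos (2 * p.1)
/-- `∂φ/∂y`. -/
noncomputable def phiY (α₁ α₂ : ℝ) (p : ℝ × ℝ × ℝ) : ℝ :=
  α₂ * Real.sin (2 * p.1) + α₁ * Real.cos (2 * p.1)

/-- Total derivative of `φ`. -/
noncomputable def Dphi (α₁ α₂ : ℝ) (p : ℝ × ℝ × ℝ) : ℝ × ℝ × ℝ →L[ℝ] ℝ :=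
  phiT α₁ α₂ p • pr1 + phiX α₁ α₂ p • pr2 + phiY α₁ α₂ p • pr3

@[simp] lemma Dphi_apply (p v : ℝ × ℝ × ℝ) :
    Dphi α₁ α₂ p v = phiT α₁ α₂ p * v.1 + phiX α₁ α₂ p * v.2.1 + phiY α₁ α₂ p * v.2.2 := by
  simp [Dphi]

lemma hasFDerivAt_t (p : ℝ × ℝ × ℝ) : HasFDerivAt (fun q : ℝ × ℝ × ℝ => q.1) pr1 p :=
  hasFDerivAt_fst
lemma hasFDerivAt_x (p : ℝ × ℝ × ℝ) : HasFDerivAt (fun q : ℝ × ℝ × ℝ => q.2.1) pr2 p :=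
  hasFDerivAt_fst.comp p hasFDerivAt_snd
lemma hasFDerivAt_y (p : ℝ × ℝ × ℝ) : HasFDerivAt (fun q : ℝ × ℝ × ℝ => q.2.2) pr3 p :=
  hasFDerivAt_snd.comp p hasFDerivAt_snd

lemma hasFDerivAt_sin2t (p : ℝ × ℝ × ℝ) :
    HasFDerivAt (fun q : ℝ × ℝ × ℝ => Real.sin (2 * q.1))
      (Real.cos (2 * p.1) • ((2:ℝ) • pr1)) p :=
  by have h := (Real.hasDerivAt_sin (2 * p.1)).comp_hasFDerivAt p ((hasFDerivAt_t p).const_mul 2); exact h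

lemma hasFDerivAt_cos2t (p : ℝ × ℝ × ℝ) :
    HasFDerivAt (fun q : ℝ × ℝ × ℝ => Real.cos (2 * q.1))
      ((-Real.sin (2 * p.1)) • ((2:ℝ) • pr1)) p :=
  by have h := (Real.hasDerivAt_cos (2 * p.1)).comp_hasFDerivAt p ((hasFDerivAt_t p).const_mul 2); exact h

lemma hasFDerivAt_phi (p : ℝ × ℝ × ℝ) :
    HasFDerivAt (phi α₁ α₂ C₁) (Dphi α₁ α₂ p) p := by
  have h1 : HasFDerivAt (fun q : ℝ × ℝ × ℝ => α₁ * q.2.1 + α₂ * q.2.2)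
      (α₁ • pr2 + α₂ • pr3) p :=
    ((hasFDerivAt_x p).const_mul α₁).add ((hasFDerivAt_y p).const_mul α₂)
  have h2 : HasFDerivAt (fun q : ℝ × ℝ × ℝ => α₁ * q.2.2 - α₂ * q.2.1)
      (α₁ • pr3 - α₂ • pr2) p :=
    ((hasFDerivAt_y p).const_mul α₁).sub ((hasFDerivAt_x p).const_mul α₂)
  have h := (((h1.mul (hasFDerivAt_sin2t p)).add (h2.mul (hasFDerivAt_cos2t p))).add_const C₁)
  refine h.congr_fderiv ?_
  refine (ContinuousLinearMap.ext fun v => ?_).symm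
  simp [Dphi, phiT, phiX, phiY]
  ring

lemma phi_conv (p : ℝ × ℝ × ℝ) :
    phiT α₁ α₂ p + 2 * p.2.2 * phiX α₁ α₂ p - 2 * p.2.1 * phiY α₁ α₂ p = 0 := by
  simp only [phiT, phiX, phiY]; ring

lemma phi_grad_sq (p : ℝ × ℝ × ℝ) :
    phiX α₁ α₂ p ^ 2 + phiY α₁ α₂ p ^ 2 = α₁ ^ 2 + α₂ ^ 2 := by
  simp only [phiX, phiY]
  linear_combination (α₁ ^ 2 + α₂ ^ 2) * Real.sin_sq_add_cos_sq (2 * p.1)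

lemma continuous_phi : Continuous (phi α₁ α₂ C₁) :=
  continuous_iff_continuousAt.2 fun p => (hasFDerivAt_phi α₁ α₂ C₁ p).continuousAt

lemma isOpen_phi_ne : IsOpen {p : ℝ × ℝ × ℝ | phi α₁ α₂ C₁ p ≠ 0} :=
  isOpen_ne.preimage (continuous_phi α₁ α₂ C₁)

/-- Derivative of the generic solution profile `a·φ⁻² + b·φ + c`. -/
lemma hasFDerivAt_sol (a b c : ℝ) {q : ℝ × ℝ × ℝ} (hq : phi α₁ α₂ C₁ q ≠ 0) :
    HasFDerivAt (fun r => a * ((phi α₁ α₂ C₁ r) ^ 2)⁻¹ + b * phi α₁ α₂ C₁ r + c)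
      ((-2 * a * ((phi α₁ α₂ C₁ q) ^ 3)⁻¹ + b) • Dphi α₁ α₂ q) q := by
  have h0 := hasFDerivAt_phi α₁ α₂ C₁ q
  have h2 : HasFDerivAt (fun r => ((phi α₁ α₂ C₁ r) ^ 2)⁻¹)
      ((-(2 * phi α₁ α₂ C₁ q ^ 1) / (phi α₁ α₂ C₁ q ^ 2) ^ 2) • Dphi α₁ α₂ q) q :=
    ((hasDerivAt_pow 2 (phi α₁ α₂ C₁ q)).inv (pow_ne_zero 2 hq)).comp_hasFDerivAt q h0
  have h := ((h2.const_mul a).add (h0.const_mul b)).add_const c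
  refine h.congr_fderiv ?_
  refine (ContinuousLinearMap.ext fun v => ?_).symm
  simp only [ContinuousLinearMap.smul_apply, ContinuousLinearMap.add_apply, smul_eq_mul,
    ContinuousLinearMap.neg_apply]
  field_simp

lemma pdT_sol (a b c : ℝ) {q : ℝ × ℝ × ℝ} (hq : phi α₁ α₂ C₁ q ≠ 0) :
    pdT (fun r => a * ((phi α₁ α₂ C₁ r) ^ 2)⁻¹ + b * phi α₁ α₂ C₁ r + c) q
      = (-2 * a * ((phi α₁ α₂ C₁ q) ^ 3)⁻¹ + b) * phiT α₁ α₂ q := by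
  unfold pdT
  rw [(hasFDerivAt_sol α₁ α₂ C₁ a b c hq).fderiv]
  simp

lemma pdX_sol (a b c : ℝ) {q : ℝ × ℝ × ℝ} (hq : phi α₁ α₂ C₁ q ≠ 0) :
    pdX (fun r => a * ((phi α₁ α₂ C₁ r) ^ 2)⁻¹ + b * phi α₁ α₂ C₁ r + c) q
      = (-2 * a * ((phi α₁ α₂ C₁ q) ^ 3)⁻¹ + b) * phiX α₁ α₂ q := by
  unfold pdX
  rw [(hasFDerivAt_sol α₁ α₂ C₁ a b c hq).fderiv]
  simp

lemma pdY_sol (a b c : ℝ) {q : ℝ × ℝ × ℝ} (hq : phi α₁ α₂ C₁ q ≠ 0) :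
    pdY (fun r => a * ((phi α₁ α₂ C₁ r) ^ 2)⁻¹ + b * phi α₁ α₂ C₁ r + c) q
      = (-2 * a * ((phi α₁ α₂ C₁ q) ^ 3)⁻¹ + b) * phiY α₁ α₂ q := by
  unfold pdY
  rw [(hasFDerivAt_sol α₁ α₂ C₁ a b c hq).fderiv]
  simp

/-- Derivative of the coefficient `-2a·φ⁻³ + b`. -/
lemma hasFDerivAt_coeff (a b : ℝ) {p : ℝ × ℝ × ℝ} (hp : phi α₁ α₂ C₁ p ≠ 0) :
    HasFDerivAt (fun q => -2 * a * ((phi α₁ α₂ C₁ q) ^ 3)⁻¹ + b)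
      ((6 * a * ((phi α₁ α₂ C₁ p) ^ 4)⁻¹) • Dphi α₁ α₂ p) p := by
  have h0 := hasFDerivAt_phi α₁ α₂ C₁ p
  have h3 : HasFDerivAt (fun r => ((phi α₁ α₂ C₁ r) ^ 3)⁻¹)
      ((-(3 * phi α₁ α₂ C₁ p ^ 2) / (phi α₁ α₂ C₁ p ^ 3) ^ 2) • Dphi α₁ α₂ p) p :=
    ((hasDerivAt_pow 3 (phi α₁ α₂ C₁ p)).inv (pow_ne_zero 3 hp)).comp_hasFDerivAt p h0
  have h := (h3.const_mul (-2 * a)).add_const b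
  refine h.congr_fderiv ?_
  refine (ContinuousLinearMap.ext fun v => ?_).symm
  simp only [ContinuousLinearMap.smul_apply, smul_eq_mul, ContinuousLinearMap.neg_apply]
  field_simp
  ring

lemma hasFDerivAt_phiX (p : ℝ × ℝ × ℝ) :
    HasFDerivAt (phiX α₁ α₂)
      ((2 * α₁ * Real.cos (2 * p.1) + 2 * α₂ * Real.sin (2 * p.1)) • pr1) p := by
  have h := ((hasFDerivAt_sin2t p).const_mul α₁).sub ((hasFDerivAt_cos2t p).const_mul α₂)
  refine h.congr_fderiv ?_
  refine (ContinuousLinearMap.ext fun v => ?_).symm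
  simp only [ContinuousLinearMap.smul_apply, smul_eq_mul, ContinuousLinearMap.sub_apply]
  ring

lemma hasFDerivAt_phiY (p : ℝ × ℝ × ℝ) :
    HasFDerivAt (phiY α₁ α₂)
      ((2 * α₂ * Real.cos (2 * p.1) - 2 * α₁ * Real.sin (2 * p.1)) • pr1) p := by
  have h := ((hasFDerivAt_sin2t p).const_mul α₂).add ((hasFDerivAt_cos2t p).const_mul α₁)
  refine h.congr_fderiv ?_
  refine (ContinuousLinearMap.ext fun v => ?_).symm
  simp only [ContinuousLinearMap.smul_apply, smul_eq_mul, ContinuousLinearMap.add_apply]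
  ring

lemma pdXX_sol (a b c : ℝ) {p : ℝ × ℝ × ℝ} (hp : phi α₁ α₂ C₁ p ≠ 0) :
    pdX (pdX (fun r => a * ((phi α₁ α₂ C₁ r) ^ 2)⁻¹ + b * phi α₁ α₂ C₁ r + c)) p
      = 6 * a * ((phi α₁ α₂ C₁ p) ^ 4)⁻¹ * (phiX α₁ α₂ p) ^ 2 := by
  have hev : pdX (fun r => a * ((phi α₁ α₂ C₁ r) ^ 2)⁻¹ + b * phi α₁ α₂ C₁ r + c)
      =ᶠ[nhds p] fun q => (-2 * a * ((phi α₁ α₂ C₁ q) ^ 3)⁻¹ + b) * phiX α₁ α₂ q := by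
    filter_upwards [(isOpen_phi_ne α₁ α₂ C₁).mem_nhds hp] with q hq
    exact pdX_sol α₁ α₂ C₁ a b c hq
  have hG : HasFDerivAt (fun q => (-2 * a * ((phi α₁ α₂ C₁ q) ^ 3)⁻¹ + b) * phiX α₁ α₂ q) _ p :=
    (hasFDerivAt_coeff α₁ α₂ C₁ a b hp).mul (hasFDerivAt_phiX α₁ α₂ p)
  have hrfl : pdX (pdX (fun r => a * ((phi α₁ α₂ C₁ r) ^ 2)⁻¹ + b * phi α₁ α₂ C₁ r + c)) p
      = fderiv ℝ (pdX (fun r => a * ((phi α₁ α₂ C₁ r) ^ 2)⁻¹ + b * phi α₁ α₂ C₁ r + c)) p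
          (0, 1, 0) := rfl
  rw [hrfl, hev.fderiv_eq, hG.fderiv]
  simp
  ring

lemma pdYY_sol (a b c : ℝ) {p : ℝ × ℝ × ℝ} (hp : phi α₁ α₂ C₁ p ≠ 0) :
    pdY (pdY (fun r => a * ((phi α₁ α₂ C₁ r) ^ 2)⁻¹ + b * phi α₁ α₂ C₁ r + c)) p
      = 6 * a * ((phi α₁ α₂ C₁ p) ^ 4)⁻¹ * (phiY α₁ α₂ p) ^ 2 := by
  have hev : pdY (fun r => a * ((phi α₁ α₂ C₁ r) ^ 2)⁻¹ + b * phi α₁ α₂ C₁ r + c)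
      =ᶠ[nhds p] fun q => (-2 * a * ((phi α₁ α₂ C₁ q) ^ 3)⁻¹ + b) * phiY α₁ α₂ q := by
    filter_upwards [(isOpen_phi_ne α₁ α₂ C₁).mem_nhds hp] with q hq
    exact pdY_sol α₁ α₂ C₁ a b c hq
  have hG : HasFDerivAt (fun q => (-2 * a * ((phi α₁ α₂ C₁ q) ^ 3)⁻¹ + b) * phiY α₁ α₂ q) _ p :=
    (hasFDerivAt_coeff α₁ α₂ C₁ a b hp).mul (hasFDerivAt_phiY α₁ α₂ p)
  have hrfl : pdY (pdY (fun r => a * ((phi α₁ α₂ C₁ r) ^ 2)⁻¹ + b * phi α₁ α₂ C₁ r + c)) p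
      = fderiv ℝ (pdY (fun r => a * ((phi α₁ α₂ C₁ r) ^ 2)⁻¹ + b * phi α₁ α₂ C₁ r + c)) p
          (0, 0, 1) := rfl
  rw [hrfl, hev.fderiv_eq, hG.fderiv]
  simp
  ring

/-- Convective derivative of the profile vanishes; Laplacian is `6a(α₁²+α₂²)φ⁻⁴`. -/
lemma sol_conv (a b c : ℝ) {p : ℝ × ℝ × ℝ} (hp : phi α₁ α₂ C₁ p ≠ 0) :
    pdT (fun r => a * ((phi α₁ α₂ C₁ r) ^ 2)⁻¹ + b * phi α₁ α₂ C₁ r + c) p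
      + 2 * p.2.2 * pdX (fun r => a * ((phi α₁ α₂ C₁ r) ^ 2)⁻¹ + b * phi α₁ α₂ C₁ r + c) p
      - 2 * p.2.1 * pdY (fun r => a * ((phi α₁ α₂ C₁ r) ^ 2)⁻¹ + b * phi α₁ α₂ C₁ r + c) p
      = 0 := by
  rw [pdT_sol α₁ α₂ C₁ a b c hp, pdX_sol α₁ α₂ C₁ a b c hp, pdY_sol α₁ α₂ C₁ a b c hp]
  linear_combination (-2 * a * ((phi α₁ α₂ C₁ p) ^ 3)⁻¹ + b) * phi_conv α₁ α₂ p

lemma sol_lap (a b c : ℝ) {p : ℝ × ℝ × ℝ} (hp : phi α₁ α₂ C₁ p ≠ 0) :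
    pdX (pdX (fun r => a * ((phi α₁ α₂ C₁ r) ^ 2)⁻¹ + b * phi α₁ α₂ C₁ r + c)) p
      + pdY (pdY (fun r => a * ((phi α₁ α₂ C₁ r) ^ 2)⁻¹ + b * phi α₁ α₂ C₁ r + c)) p
      = 6 * a * (α₁ ^ 2 + α₂ ^ 2) * ((phi α₁ α₂ C₁ p) ^ 4)⁻¹ := by
  rw [pdXX_sol α₁ α₂ C₁ a b c hp, pdYY_sol α₁ α₂ C₁ a b c hp]
  linear_combination 6 * a * ((phi α₁ α₂ C₁ p) ^ 4)⁻¹ * phi_grad_sq α₁ α₂ p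

end LVAux

/-- Exact solution (3-56) of system (2-23): on `Ω = {φ ≠ 0}` the functions
`u = 6d₂(α₁²+α₂²)φ⁻²`, `v = 6d₁(α₁²+α₂²)φ⁻²`,
`w = ((α₁²+α₂²)/d₃)(−6d₁d₂φ⁻² + C₃(φ−C₁) + C₄)` solve system (2-23). -/
theorem exact_solution_3_56
    (d₁ d₂ d₃ α₁ α₂ C₁ C₃ C₄ : ℝ) (hd₃ : d₃ ≠ 0) :
    Solves223 d₁ d₂ d₃
      (fun p => 6 * d₂ * (α₁ ^ 2 + α₂ ^ 2) * ((phi α₁ α₂ C₁ p) ^ 2)⁻¹)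
      (fun p => 6 * d₁ * (α₁ ^ 2 + α₂ ^ 2) * ((phi α₁ α₂ C₁ p) ^ 2)⁻¹)
      (fun p => ((α₁ ^ 2 + α₂ ^ 2) / d₃) *
        (-(6 * d₁ * d₂) * ((phi α₁ α₂ C₁ p) ^ 2)⁻¹ + C₃ * (phi α₁ α₂ C₁ p - C₁) + C₄))
      {p : ℝ × ℝ × ℝ | phi α₁ α₂ C₁ p ≠ 0} := by
  intro p hp
  have hp' : phi α₁ α₂ C₁ p ≠ 0 := hp
  set A := α₁ ^ 2 + α₂ ^ 2 with hA
  have hu : (fun p => 6 * d₂ * A * ((phi α₁ α₂ C₁ p) ^ 2)⁻¹)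
      = fun r => (6 * d₂ * A) * ((phi α₁ α₂ C₁ r) ^ 2)⁻¹ + 0 * phi α₁ α₂ C₁ r + 0 := by
    funext r; ring
  have hv : (fun p => 6 * d₁ * A * ((phi α₁ α₂ C₁ p) ^ 2)⁻¹)
      = fun r => (6 * d₁ * A) * ((phi α₁ α₂ C₁ r) ^ 2)⁻¹ + 0 * phi α₁ α₂ C₁ r + 0 := by
    funext r; ring
  have hw : (fun p => (A / d₃) *
        (-(6 * d₁ * d₂) * ((phi α₁ α₂ C₁ p) ^ 2)⁻¹ + C₃ * (phi α₁ α₂ C₁ p - C₁) + C₄))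
      = fun r => (-(6 * d₁ * d₂) * A / d₃) * ((phi α₁ α₂ C₁ r) ^ 2)⁻¹
          + (A * C₃ / d₃) * phi α₁ α₂ C₁ r + (A * (C₄ - C₃ * C₁) / d₃) := by
    funext r; ring
  rw [hu, hv, hw]
  refine ⟨?_, ?_, ?_⟩ <;>
  · rw [sol_conv α₁ α₂ C₁ _ _ _ hp', sol_lap α₁ α₂ C₁ _ _ _ hp']
    field_simp
    ring
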